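/- For n ≥ 7, let Z_n be the graph obtained from K_{n-3} minus an edge xy, together with a disjoint triangle uvw, by adding the edges xu and yv. Then Z_n is a 2-connected [4,2]-graph with connectivity 2 and independence number 3; in particular κ(Z_n) < α(Z_n). -/

import Mathlib

open SimpleGraph

/-- A graph `G` is an `[s,t]`-graph if every induced subgraph of order `s` has at least
`t` edges. -/
def IsSTGraph {V : Type*} [Fintype V] [DecidableEq V] (G : SimpleGraph V) [DecidableRel G.Adj]
    (s t : ℕ) : Prop :=
  ∀ S : Finset V, S.card = s → t ≤ (G.induce (S : Set V)).edgeFinset.card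

/-- A graph is `k`-connected if it has more than `k` vertices and removing any set of fewer
than `k` vertices leaves a connected graph. -/
def IsKConnected {V : Type*} [Fintype V] (G : SimpleGraph V) (k : ℕ) : Prop :=
  k < Fintype.card V ∧ ∀ S : Finset V, S.card < k → (G.induce ((↑S : Set V)ᶜ)).Connected

/-- The graph `Z n` on `Fin n` (for `n ≥ 7`): vertices `0, …, n-4` induce `K_{n-3}` minus the
edge `xy` where `x = 0`, `y = 1`; vertices `u = n-3`, `v = n-2`, `w = n-1` form a triangle;
and the edges `xu` and `yv` are added. -/
def Zgraph (n : ℕ) : SimpleGraph (Fin n) where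
  Adj i j := i ≠ j ∧
    (((i : ℕ) < n - 3 ∧ (j : ℕ) < n - 3 ∧ ¬((i : ℕ) = 0 ∧ (j : ℕ) = 1) ∧
        ¬((i : ℕ) = 1 ∧ (j : ℕ) = 0)) ∨
      (n - 3 ≤ (i : ℕ) ∧ n - 3 ≤ (j : ℕ)) ∨
      ((i : ℕ) = 0 ∧ (j : ℕ) = n - 3) ∨ ((j : ℕ) = 0 ∧ (i : ℕ) = n - 3) ∨
      ((i : ℕ) = 1 ∧ (j : ℕ) = n - 2) ∨ ((j : ℕ) = 1 ∧ (i : ℕ) = n - 2))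
  symm := by
    constructor
    intro i j ⟨hne, h⟩
    exact ⟨hne.symm, by tauto⟩
  loopless := by
    constructor
    intro i ⟨hne, _⟩
    exact hne rfl

instance (n : ℕ) : DecidableRel (Zgraph n).Adj :=
  fun i j => inferInstanceAs (Decidable (_ ∧ _))

section ZAux

variable {n : ℕ}

lemma zadj (i j : Fin n) : (Zgraph n).Adj i j ↔ ((i : ℕ) ≠ (j : ℕ) ∧
    (((i : ℕ) < n - 3 ∧ (j : ℕ) < n - 3 ∧ ¬((i : ℕ) = 0 ∧ (j : ℕ) = 1) ∧
        ¬((i : ℕ) = 1 ∧ (j : ℕ) = 0)) ∨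
      (n - 3 ≤ (i : ℕ) ∧ n - 3 ≤ (j : ℕ)) ∨
      ((i : ℕ) = 0 ∧ (j : ℕ) = n - 3) ∨ ((j : ℕ) = 0 ∧ (i : ℕ) = n - 3) ∨
      ((i : ℕ) = 1 ∧ (j : ℕ) = n - 2) ∨ ((j : ℕ) = 1 ∧ (i : ℕ) = n - 2))) := by
  constructor
  · rintro ⟨h1, h2⟩; exact ⟨fun h => h1 (Fin.ext h), h2⟩
  · rintro ⟨h1, h2⟩; exact ⟨fun h => h1 (congrArg Fin.val h), h2⟩

lemma zadj_low_iff (hn : 7 ≤ n) {i j : Fin n} (hi : (i : ℕ) < n - 3) (hj : (j : ℕ) < n - 3) :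
    (Zgraph n).Adj i j ↔ ((i : ℕ) ≠ (j : ℕ) ∧ ¬((i : ℕ) = 0 ∧ (j : ℕ) = 1) ∧
      ¬((i : ℕ) = 1 ∧ (j : ℕ) = 0)) := by
  rw [zadj]; omega

lemma zadj_high (hn : 7 ≤ n) {i j : Fin n} (hij : (i : ℕ) ≠ (j : ℕ))
    (hi : n - 3 ≤ (i : ℕ)) (hj : n - 3 ≤ (j : ℕ)) : (Zgraph n).Adj i j := by
  rw [zadj]; omega

lemma zadj_cross0 (hn : 7 ≤ n) {i j : Fin n} (hi : (i : ℕ) = 0) (hj : (j : ℕ) = n - 3) :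
    (Zgraph n).Adj i j := by
  rw [zadj]; omega

lemma zadj_cross1 (hn : 7 ≤ n) {i j : Fin n} (hi : (i : ℕ) = 1) (hj : (j : ℕ) = n - 2) :
    (Zgraph n).Adj i j := by
  rw [zadj]; omega

lemma zadj_last (hn : 7 ≤ n) {i j : Fin n} (hi : (i : ℕ) = n - 1)
    (h : (Zgraph n).Adj i j) : n - 3 ≤ (j : ℕ) ∧ (j : ℕ) ≠ n - 1 := by
  rw [zadj] at h; omega

lemma znonadj (hn : 7 ≤ n) {i j : Fin n}
    (hi : (i : ℕ) = 0 ∨ (i : ℕ) = 1 ∨ (i : ℕ) = n - 1)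
    (hj : (j : ℕ) = 0 ∨ (j : ℕ) = 1 ∨ (j : ℕ) = n - 1) : ¬ (Zgraph n).Adj i j := by
  rw [zadj]; omega

lemma zreach_start {V : Type*} {G : SimpleGraph V} {a b : V} (h : G.Reachable a b) :
    a = b ∨ ∃ c, G.Adj a c := by
  obtain ⟨p⟩ := h
  cases p with
  | nil => exact Or.inl rfl
  | cons h _ => exact Or.inr ⟨_, h⟩

lemma zinduce_adj {V : Type*} (G : SimpleGraph V) (T : Set V) (a b : T) :
    (G.induce T).Adj a b ↔ G.Adj a.1 b.1 := Iff.rfl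

/-- Part 5: independence number at most 3. -/
lemma zindep_le3 (hn : 7 ≤ n) (S : Finset (Fin n))
    (h : ∀ a ∈ S, ∀ b ∈ S, a ≠ b → ¬ (Zgraph n).Adj a b) : S.card ≤ 3 := by
  classical
  set L := S.filter (fun v : Fin n => (v : ℕ) < n - 3) with hLdef
  set H := S.filter (fun v : Fin n => ¬ (v : ℕ) < n - 3) with hHdef
  have hsum : L.card + H.card = S.card :=
    Finset.card_filter_add_card_filter_not _
  have hL : L.card ≤ 2 := by
    by_contra hc
    push_neg at hc
    obtain ⟨a, ha, b, hb, c, hc', hab, hac, hbc⟩ := Finset.two_lt_card.mp hc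
    rw [hLdef, Finset.mem_filter] at ha hb hc'
    have h1 := h a ha.1 b hb.1 hab
    have h2 := h a ha.1 c hc'.1 hac
    rw [zadj_low_iff hn ha.2 hb.2] at h1
    rw [zadj_low_iff hn ha.2 hc'.2] at h2
    have hab' : (a : ℕ) ≠ (b : ℕ) := fun hh => hab (Fin.ext hh)
    have hac' : (a : ℕ) ≠ (c : ℕ) := fun hh => hac (Fin.ext hh)
    have : (b : ℕ) = (c : ℕ) := by omega
    exact hbc (Fin.ext this)
  have hH : H.card ≤ 1 := by
    by_contra hc
    push_neg at hc
    obtain ⟨a, ha, b, hb, hab⟩ := Finset.one_lt_card.mp hc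
    rw [hHdef, Finset.mem_filter] at ha hb
    exact h a ha.1 b hb.1 hab
      (zadj_high hn (fun hh => hab (Fin.ext hh)) (by omega) (by omega))
  omega

/-- two distinct edges give edge count at least 2 in the induced subgraph -/
lemma zedges_two (S : Finset (Fin n)) {a b c d : Fin n}
    (ha : a ∈ S) (hb : b ∈ S) (hc : c ∈ S) (hd : d ∈ S)
    (h1 : (Zgraph n).Adj a b) (h2 : (Zgraph n).Adj c d)
    (hne : s(a, b) ≠ s(c, d)) :
    2 ≤ ((Zgraph n).induce (S : Set (Fin n))).edgeFinset.card := by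
  classical
  have ha' : a ∈ (S : Set (Fin n)) := ha
  have hb' : b ∈ (S : Set (Fin n)) := hb
  have hc' : c ∈ (S : Set (Fin n)) := hc
  have hd' : d ∈ (S : Set (Fin n)) := hd
  set G' := (Zgraph n).induce (S : Set (Fin n)) with hG'
  have he1 : s((⟨a, ha'⟩ : (S : Set (Fin n))), ⟨b, hb'⟩) ∈ G'.edgeFinset := by
    rw [SimpleGraph.mem_edgeFinset, SimpleGraph.mem_edgeSet]
    exact (zinduce_adj _ _ _ _).mpr h1
  have he2 : s((⟨c, hc'⟩ : (S : Set (Fin n))), ⟨d, hd'⟩) ∈ G'.edgeFinset := by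
    rw [SimpleGraph.mem_edgeFinset, SimpleGraph.mem_edgeSet]
    exact (zinduce_adj _ _ _ _).mpr h2
  refine Finset.one_lt_card.mpr ⟨_, he1, _, he2, ?_⟩
  intro hcontra
  rw [Sym2.eq_iff] at hcontra
  apply hne
  rw [Sym2.eq_iff]
  rcases hcontra with ⟨h1', h2'⟩ | ⟨h1', h2'⟩
  · exact Or.inl ⟨congrArg Subtype.val h1', congrArg Subtype.val h2'⟩
  · exact Or.inr ⟨congrArg Subtype.val h1', congrArg Subtype.val h2'⟩

/-- Part 2: [4,2]-graph. -/
lemma zst42 (hn : 7 ≤ n) : IsSTGraph (Zgraph n) 4 2 := by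
  classical
  intro S hS4
  set L := S.filter (fun v : Fin n => (v : ℕ) < n - 3) with hLdef
  set H := S.filter (fun v : Fin n => ¬ (v : ℕ) < n - 3) with hHdef
  have hsum : L.card + H.card = S.card :=
    Finset.card_filter_add_card_filter_not _
  have hmemL : ∀ v ∈ L, v ∈ S ∧ (v : ℕ) < n - 3 := by
    intro v hv; rw [hLdef, Finset.mem_filter] at hv; exact hv
  have hmemH : ∀ v ∈ H, v ∈ S ∧ n - 3 ≤ (v : ℕ) := by
    intro v hv; rw [hHdef, Finset.mem_filter] at hv; exact ⟨hv.1, by omega⟩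
  have hH3 : H.card ≤ 3 := by
    have himg : H.card = (H.image Fin.val).card :=
      (Finset.card_image_of_injective H Fin.val_injective).symm
    have hsub : H.image Fin.val ⊆ Finset.Icc (n - 3) (n - 1) := by
      intro v hv
      rw [Finset.mem_image] at hv
      obtain ⟨u, hu, rfl⟩ := hv
      have := (hmemH u hu).2
      have := u.isLt
      rw [Finset.mem_Icc]
      omega
    have := Finset.card_le_card hsub
    rw [Nat.card_Icc] at this
    omega
  rcases (by omega : H.card = 0 ∨ H.card = 1 ∨ H.card = 2 ∨ H.card = 3) with h0 | h1 | h2 | h3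
  case inl | inr.inl =>
    -- L.card ≥ 3 : pick three low vertices, at least two edges among them
    have hL3 : 2 < L.card := by omega
    obtain ⟨a, ha, b, hb, c, hc, hab, hac, hbc⟩ := Finset.two_lt_card.mp hL3
    obtain ⟨haS, haL⟩ := hmemL a ha
    obtain ⟨hbS, hbL⟩ := hmemL b hb
    obtain ⟨hcS, hcL⟩ := hmemL c hc
    have hab' : (a : ℕ) ≠ (b : ℕ) := fun hh => hab (Fin.ext hh)
    have hac' : (a : ℕ) ≠ (c : ℕ) := fun hh => hac (Fin.ext hh)
    have hbc' : (b : ℕ) ≠ (c : ℕ) := fun hh => hbc (Fin.ext hh)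
    by_cases hbad1 : ((a : ℕ) = 0 ∧ (b : ℕ) = 1) ∨ ((a : ℕ) = 1 ∧ (b : ℕ) = 0)
    · -- use edges (a,c) and (b,c)
      refine zedges_two S haS hcS hbS hcS ?_ ?_ ?_
      · rw [zadj_low_iff hn haL hcL]; omega
      · rw [zadj_low_iff hn hbL hcL]; omega
      · rw [ne_eq, Sym2.eq_iff]
        rintro (⟨h1', h2'⟩ | ⟨h1', h2'⟩)
        · exact hab h1'
        · exact hac h1'
    · by_cases hbad2 : ((a : ℕ) = 0 ∧ (c : ℕ) = 1) ∨ ((a : ℕ) = 1 ∧ (c : ℕ) = 0)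
      · -- use edges (a,b) and (c,b)
        refine zedges_two S haS hbS hcS hbS ?_ ?_ ?_
        · rw [zadj_low_iff hn haL hbL]; omega
        · rw [zadj_low_iff hn hcL hbL]; omega
        · rw [ne_eq, Sym2.eq_iff]
          rintro (⟨h1', h2'⟩ | ⟨h1', h2'⟩)
          · exact hac h1'
          · exact hab h1'
      · -- use edges (a,b) and (a,c)
        refine zedges_two S haS hbS haS hcS ?_ ?_ ?_
        · rw [zadj_low_iff hn haL hbL]; omega
        · rw [zadj_low_iff hn haL hcL]; omega
        · rw [ne_eq, Sym2.eq_iff]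
          rintro (⟨h1', h2'⟩ | ⟨h1', h2'⟩)
          · exact hbc h2'
          · exact hac h1'
  case inr.inr.inl =>
    -- two high vertices x,y (adjacent) and two low vertices a,b
    obtain ⟨x, y, hxy, hHxy⟩ := Finset.card_eq_two.mp h2
    have hx : x ∈ H := by rw [hHxy]; simp
    have hy : y ∈ H := by rw [hHxy]; simp
    obtain ⟨hxS, hxH⟩ := hmemH x hx
    obtain ⟨hyS, hyH⟩ := hmemH y hy
    have hLc : L.card = 2 := by omega
    obtain ⟨a, b, hab, hLab⟩ := Finset.card_eq_two.mp hLc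
    have ha : a ∈ L := by rw [hLab]; simp
    have hb : b ∈ L := by rw [hLab]; simp
    obtain ⟨haS, haL⟩ := hmemL a ha
    obtain ⟨hbS, hbL⟩ := hmemL b hb
    have hab' : (a : ℕ) ≠ (b : ℕ) := fun hh => hab (Fin.ext hh)
    have hxy' : (x : ℕ) ≠ (y : ℕ) := fun hh => hxy (Fin.ext hh)
    have hxyadj : (Zgraph n).Adj x y := zadj_high hn hxy' hxH hyH
    by_cases hbad : ((a : ℕ) = 0 ∧ (b : ℕ) = 1) ∨ ((a : ℕ) = 1 ∧ (b : ℕ) = 0)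
    · -- bad low pair; find high vertex r with val n-3 or n-2
      have hxlt := x.isLt
      have hylt := y.isLt
      obtain ⟨r, hrS, hrval⟩ :
          ∃ r : Fin n, r ∈ S ∧ ((r : ℕ) = n - 3 ∨ (r : ℕ) = n - 2) := by
        by_cases hxv : (x : ℕ) = n - 1
        · exact ⟨y, hyS, by omega⟩
        · exact ⟨x, hxS, by omega⟩
      obtain ⟨z, hzS, hzL, hzadj⟩ :
          ∃ z : Fin n, z ∈ S ∧ (z : ℕ) < n - 3 ∧ (Zgraph n).Adj z r := by
        rcases hrval with hr3 | hr2
        · rcases hbad with ⟨ha0, _⟩ | ⟨_, hb0⟩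
          · exact ⟨a, haS, haL, zadj_cross0 hn ha0 hr3⟩
          · exact ⟨b, hbS, hbL, zadj_cross0 hn hb0 hr3⟩
        · rcases hbad with ⟨_, hb1⟩ | ⟨ha1, _⟩
          · exact ⟨b, hbS, hbL, zadj_cross1 hn hb1 hr2⟩
          · exact ⟨a, haS, haL, zadj_cross1 hn ha1 hr2⟩
      refine zedges_two S hzS hrS hxS hyS hzadj hxyadj ?_
      rw [ne_eq, Sym2.eq_iff]
      rintro (⟨h1', _⟩ | ⟨h1', _⟩)
      · rw [h1'] at hzL; omega
      · rw [h1'] at hzL; omega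
    · -- a,b adjacent
      refine zedges_two S haS hbS hxS hyS
        ((zadj_low_iff hn haL hbL).mpr (by omega)) hxyadj ?_
      rw [ne_eq, Sym2.eq_iff]
      rintro (⟨h1', _⟩ | ⟨h1', _⟩)
      · rw [h1'] at haL; omega
      · rw [h1'] at haL; omega
  case inr.inr.inr =>
    obtain ⟨x, y, z, hxy, hxz, hyz, hHxyz⟩ := Finset.card_eq_three.mp h3
    have hx : x ∈ H := by rw [hHxyz]; simp
    have hy : y ∈ H := by rw [hHxyz]; simp
    have hz : z ∈ H := by rw [hHxyz]; simp
    obtain ⟨hxS, hxH⟩ := hmemH x hx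
    obtain ⟨hyS, hyH⟩ := hmemH y hy
    obtain ⟨hzS, hzH⟩ := hmemH z hz
    refine zedges_two S hxS hyS hxS hzS
      (zadj_high hn (fun hh => hxy (Fin.ext hh)) hxH hyH)
      (zadj_high hn (fun hh => hxz (Fin.ext hh)) hxH hzH) ?_
    rw [ne_eq, Sym2.eq_iff]
    rintro (⟨_, h2'⟩ | ⟨h1', _⟩)
    · exact hyz h2'
    · exact hxz h1'

/-- Part 1: 2-connected. -/
lemma ztwoconn (hn : 7 ≤ n) : IsKConnected (Zgraph n) 2 := by
  classical
  constructor
  · simp only [Fintype.card_fin]; omega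
  intro S hS
  have hcard : ∀ a b : Fin n, a ∈ S → b ∈ S → a = b := by
    intro a b ha hb
    have h1 : S.card ≤ 1 := by omega
    exact Finset.card_le_one.mp h1 a ha b hb
  set T : Set (Fin n) := (↑S : Set (Fin n))ᶜ with hT
  have hmemT : ∀ v : Fin n, v ∈ T ↔ v ∉ S := by
    intro v; rw [hT]; simp
  -- a middle vertex always survives
  have hmid : ∃ c : Fin n, c ∈ T ∧ 2 ≤ (c : ℕ) ∧ (c : ℕ) < n - 3 := by
    by_cases h2 : (⟨2, by omega⟩ : Fin n) ∈ S
    · refine ⟨⟨3, by omega⟩, ?_, by simp, by simp; omega⟩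
      rw [hmemT]
      intro h3
      have := hcard _ _ h2 h3
      simp [Fin.ext_iff] at this
    · exact ⟨⟨2, by omega⟩, (hmemT _).mpr h2, by simp, by simp; omega⟩
  set G' := (Zgraph n).induce T with hG'
  -- reachability among surviving low vertices
  have key_low : ∀ a b : T, (a.1 : ℕ) < n - 3 → (b.1 : ℕ) < n - 3 → G'.Reachable a b := by
    intro a b ha hb
    by_cases hab : a = b
    · rw [hab]
    have hne : (a.1 : ℕ) ≠ (b.1 : ℕ) := fun hh => hab (Subtype.ext (Fin.ext hh))
    by_cases hbad : ((a.1 : ℕ) = 0 ∧ (b.1 : ℕ) = 1) ∨ ((a.1 : ℕ) = 1 ∧ (b.1 : ℕ) = 0)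
    · obtain ⟨c, hcT, hc2, hc3⟩ := hmid
      have h1 : G'.Adj a ⟨c, hcT⟩ := by
        rw [hG', zinduce_adj, zadj_low_iff hn ha hc3]; omega
      have h2 : G'.Adj (⟨c, hcT⟩ : T) b := by
        rw [hG', zinduce_adj, zadj_low_iff hn hc3 hb]; omega
      exact h1.reachable.trans h2.reachable
    · exact SimpleGraph.Adj.reachable
        (by rw [hG', zinduce_adj, zadj_low_iff hn ha hb]; omega)
  have key_high : ∀ a b : T, n - 3 ≤ (a.1 : ℕ) → n - 3 ≤ (b.1 : ℕ) → G'.Reachable a b := by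
    intro a b ha hb
    by_cases hab : a = b
    · rw [hab]
    have hne : (a.1 : ℕ) ≠ (b.1 : ℕ) := fun hh => hab (Subtype.ext (Fin.ext hh))
    exact SimpleGraph.Adj.reachable (by rw [hG', zinduce_adj]; exact zadj_high hn hne ha hb)
  -- a surviving cross edge
  have cross : ∃ x y : T, (x.1 : ℕ) < n - 3 ∧ n - 3 ≤ (y.1 : ℕ) ∧ G'.Adj x y := by
    by_cases h0 : (⟨0, by omega⟩ : Fin n) ∈ S ∨ (⟨n - 3, by omega⟩ : Fin n) ∈ S
    · have h1T : (⟨1, by omega⟩ : Fin n) ∈ T := by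
        rw [hmemT]; intro hmem
        rcases h0 with hh | hh <;>
          (have h2 := congrArg Fin.val (hcard _ _ hh hmem);
            simp only [Fin.val_mk] at h2; omega)
      have h2T : (⟨n - 2, by omega⟩ : Fin n) ∈ T := by
        rw [hmemT]; intro hmem
        rcases h0 with hh | hh <;>
          (have h2 := congrArg Fin.val (hcard _ _ hh hmem);
            simp only [Fin.val_mk] at h2; omega)
      refine ⟨⟨_, h1T⟩, ⟨_, h2T⟩, by simp only [Fin.val_mk]; omega,
        by simp only [Fin.val_mk]; omega, ?_⟩
      rw [hG', zinduce_adj]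
      exact zadj_cross1 hn rfl rfl
    · push_neg at h0
      refine ⟨⟨_, (hmemT _).mpr h0.1⟩, ⟨_, (hmemT _).mpr h0.2⟩,
        by simp only [Fin.val_mk]; omega, by simp only [Fin.val_mk]; omega, ?_⟩
      rw [hG', zinduce_adj]
      exact zadj_cross0 hn rfl rfl
  have hpre : G'.Preconnected := by
    intro a b
    by_cases ha : (a.1 : ℕ) < n - 3 <;> by_cases hb : (b.1 : ℕ) < n - 3
    · exact key_low a b ha hb
    · obtain ⟨x, y, hx, hy, hadj⟩ := cross
      exact ((key_low a x ha hx).trans hadj.reachable).trans (key_high y b hy (by omega))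
    · obtain ⟨x, y, hx, hy, hadj⟩ := cross
      exact ((key_high a y (by omega) hy).trans hadj.symm.reachable).trans (key_low x b hx hb)
    · exact key_high a b (by omega) (by omega)
  obtain ⟨c, hcT, _, _⟩ := hmid
  haveI : Nonempty T := ⟨⟨c, hcT⟩⟩
  exact ⟨hpre⟩

/-- Part 3: not 3-connected. -/
lemma znot3conn (hn : 7 ≤ n) : ¬ IsKConnected (Zgraph n) 3 := by
  classical
  rintro ⟨-, hcon⟩
  have hScard : ({⟨n - 3, by omega⟩, ⟨n - 2, by omega⟩} : Finset (Fin n)).card < 3 := by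
    have := Finset.card_insert_le (⟨n - 3, by omega⟩ : Fin n)
      ({⟨n - 2, by omega⟩} : Finset (Fin n))
    have h1 : ({⟨n - 2, by omega⟩} : Finset (Fin n)).card = 1 := Finset.card_singleton _
    omega
  have hcon' := hcon _ hScard
  have hwT : (⟨n - 1, by omega⟩ : Fin n) ∈
      ((↑({⟨n - 3, by omega⟩, ⟨n - 2, by omega⟩} : Finset (Fin n)) : Set (Fin n))ᶜ) := by
    simp only [Set.mem_compl_iff, Finset.coe_insert, Finset.coe_singleton,
      Set.mem_insert_iff, Set.mem_singleton_iff, Fin.ext_iff, Fin.val_mk]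
    omega
  have hzT : (⟨2, by omega⟩ : Fin n) ∈
      ((↑({⟨n - 3, by omega⟩, ⟨n - 2, by omega⟩} : Finset (Fin n)) : Set (Fin n))ᶜ) := by
    simp only [Set.mem_compl_iff, Finset.coe_insert, Finset.coe_singleton,
      Set.mem_insert_iff, Set.mem_singleton_iff, Fin.ext_iff, Fin.val_mk]
    omega
  have hreach := hcon'.preconnected ⟨_, hwT⟩ ⟨_, hzT⟩
  rcases zreach_start hreach with heq | ⟨c, hadj⟩
  · have h1 := congrArg Subtype.val heq
    have h2 := congrArg Fin.val h1
    simp only [Fin.val_mk] at h2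
    omega
  · rw [zinduce_adj] at hadj
    have hlast := zadj_last hn (by simp) hadj
    have hclt := c.1.isLt
    have hcS : c.1 ∈ ({⟨n - 3, by omega⟩, ⟨n - 2, by omega⟩} : Finset (Fin n)) := by
      simp only [Finset.mem_insert, Finset.mem_singleton, Fin.ext_iff, Fin.val_mk]
      omega
    have hc2 := c.2
    rw [Set.mem_compl_iff] at hc2
    exact hc2 hcS

end ZAux

/-- for `n ≥ 7`, the graph `Z n` is a 2-connected `[4,2]`-graph with
connectivity exactly 2 and independence number exactly 3; in particular `κ(Z n) < α(Z n)`. -/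
theorem Zgraph_properties (n : ℕ) (hn : 7 ≤ n) :
    IsKConnected (Zgraph n) 2 ∧ IsSTGraph (Zgraph n) 4 2 ∧
      ¬ IsKConnected (Zgraph n) 3 ∧
      (∃ S : Finset (Fin n), (∀ a ∈ S, ∀ b ∈ S, a ≠ b → ¬ (Zgraph n).Adj a b) ∧ S.card = 3) ∧
      (∀ S : Finset (Fin n), (∀ a ∈ S, ∀ b ∈ S, a ≠ b → ¬ (Zgraph n).Adj a b) → S.card ≤ 3) := by
  refine ⟨ztwoconn hn, zst42 hn, znot3conn hn,
    ⟨{⟨0, by omega⟩, ⟨1, by omega⟩, ⟨n - 1, by omega⟩}, ?_, ?_⟩,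
    fun S hS => zindep_le3 hn S hS⟩
  · intro a ha b hb hab
    simp only [Finset.mem_insert, Finset.mem_singleton] at ha hb
    refine znonadj hn ?_ ?_
    · rcases ha with rfl | rfl | rfl <;> simp
    · rcases hb with rfl | rfl | rfl <;> simp
  · rw [Finset.card_insert_of_notMem (by simp [Fin.ext_iff]; omega),
      Finset.card_insert_of_notMem (by simp [Fin.ext_iff]; omega)]
    simp
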